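/- In a bipartite graph Σ with parts X and Y, if A ⊆ X is 2-linked then its closure [A] = {v ∈ X : N(v) ⊆ N(A)} is also 2-linked. -/

import Mathlib

/-- A set `A` is `k`-linked in `G` if any two of its vertices are joined by a sequence of
vertices of `A` in which consecutive vertices are at graph distance at most `k`. -/
def IsLinked {V : Type*} (G : SimpleGraph V) (k : ℕ) (A : Set V) : Prop :=
  ∀ u ∈ A, ∀ v ∈ A, ∃ (m : ℕ) (f : Fin (m + 1) → V),
    f 0 = u ∧ f (Fin.last m) = v ∧ (∀ i, f i ∈ A) ∧
    ∀ i : Fin m, G.Reachable (f i.castSucc) (f i.succ) ∧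
      G.dist (f i.castSucc) (f i.succ) ≤ k

/-- The neighbourhood of a set of vertices. -/
def nbhd {V : Type*} (G : SimpleGraph V) (A : Set V) : Set V := {y | ∃ a ∈ A, G.Adj a y}

/-- in a `d`-regular bipartite graph with parts `X`, `Y`, if `A ⊆ X` is
`2`-linked then its closure `[A] = {v ∈ X : N(v) ⊆ N(A)}` is `2`-linked. -/
theorem closure_linked {V : Type*} [Fintype V] (G : SimpleGraph V) [DecidableRel G.Adj]
    (d : ℕ) (hd : 1 ≤ d) (hreg : ∀ v : V, G.degree v = d) (X Y : Set V)
    (hpart : ∀ v : V, (v ∈ X ∧ v ∉ Y) ∨ (v ∈ Y ∧ v ∉ X))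
    (hbip : ∀ u v : V, G.Adj u v → (u ∈ X ∧ v ∈ Y) ∨ (u ∈ Y ∧ v ∈ X))
    (A : Set V) (hAX : A ⊆ X) (hA : IsLinked G 2 A) :
    IsLinked G 2 {v ∈ X | G.neighborSet v ⊆ nbhd G A} := by
  intro u hu v hv
  -- every vertex of the closure is within distance 2 of a vertex of A
  have key : ∀ w, w ∈ {v ∈ X | G.neighborSet v ⊆ nbhd G A} →
      ∃ a ∈ A, G.Reachable w a ∧ G.dist w a ≤ 2 := by
    intro w hw
    have hdeg : 0 < G.degree w := by rw [hreg]; omega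
    rw [← SimpleGraph.card_neighborFinset_eq_degree, Finset.card_pos] at hdeg
    obtain ⟨y, hy⟩ := hdeg
    rw [SimpleGraph.mem_neighborFinset] at hy
    have hyA : y ∈ nbhd G A := hw.2 hy
    obtain ⟨a, haA, hay⟩ := hyA
    refine ⟨a, haA, ?_, ?_⟩
    · exact ⟨SimpleGraph.Walk.cons hy (SimpleGraph.Walk.cons hay.symm SimpleGraph.Walk.nil)⟩
    · have := SimpleGraph.dist_le (SimpleGraph.Walk.cons hy
        (SimpleGraph.Walk.cons hay.symm SimpleGraph.Walk.nil))
      simpa using this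
  obtain ⟨a, haA, hua_r, hua_d⟩ := key u hu
  obtain ⟨b, hbA, hvb_r, hvb_d⟩ := key v hv
  obtain ⟨m, f, hf0, hfl, hfmem, hfe⟩ := hA a haA b hbA
  refine ⟨m + 2, fun j => if h : (j : ℕ) ≤ m + 1 then
      (if (j : ℕ) = 0 then u else f ⟨(j : ℕ) - 1, by omega⟩) else v, ?_, ?_, ?_, ?_⟩
  · simp
  · beta_reduce
    rw [dif_neg (by simp [Fin.val_last])]
  · intro j
    beta_reduce
    by_cases h1 : (j : ℕ) ≤ m + 1
    · rw [dif_pos h1]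
      by_cases h2 : (j : ℕ) = 0
      · rw [if_pos h2]; exact hu
      · rw [if_neg h2]
        exact ⟨hAX (hfmem _), fun y hy => ⟨_, hfmem _, hy⟩⟩
    · rw [dif_neg h1]; exact hv
  · intro i
    beta_reduce
    have hic : ((i.castSucc : Fin (m + 3)) : ℕ) = (i : ℕ) := rfl
    have his : ((i.succ : Fin (m + 3)) : ℕ) = (i : ℕ) + 1 := rfl
    have hi : (i : ℕ) < m + 2 := i.isLt
    rcases Nat.lt_or_ge (i : ℕ) 1 with h0 | h1
    · -- i = 0 : edge from u to a
      have e0 : (i : ℕ) = 0 := by omega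
      simp only [hic, his, e0]
      rw [dif_pos (by omega), if_pos trivial, dif_pos (by omega), if_neg (by omega)]
      have : f ⟨0 + 1 - 1, by omega⟩ = a := by
        rw [← hf0]; congr 1
      rw [this]
      exact ⟨hua_r, hua_d⟩
    · rcases Nat.lt_or_ge (i : ℕ) (m + 1) with h2 | h2
      · -- middle edges
        simp only [hic, his]
        rw [dif_pos (by omega), if_neg (by omega), dif_pos (by omega), if_neg (by omega)]
        set k : Fin m := ⟨(i : ℕ) - 1, by omega⟩ with hk
        have e1 : (⟨(i : ℕ) - 1, by omega⟩ : Fin (m + 1)) = k.castSucc := by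
          simp [hk, Fin.castSucc, Fin.castAdd, Fin.castLE]
        have e2 : (⟨(i : ℕ) + 1 - 1, by omega⟩ : Fin (m + 1)) = k.succ := by
          apply Fin.ext; simp [hk]; omega
        rw [e1, e2]
        exact hfe k
      · -- last edge : from b to v
        have e0 : (i : ℕ) = m + 1 := by omega
        simp only [hic, his, e0]
        rw [dif_pos (by omega), if_neg (by omega), dif_neg (by omega)]
        have : f ⟨m + 1 - 1, by omega⟩ = b := by
          rw [← hfl]; congr 1
        rw [this]
        exact ⟨hvb_r.symm, by rwa [SimpleGraph.dist_comm]⟩
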